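/- Suppose a graph G on vertex set V contains a k-clique W, and take G₂ to be the complete graph on V. With singleton blocks and the k vertices of W chosen as shared blocks (mapped to any k distinct vertices of G₂), the SSBM-fixed objective (sum of blockwise log-likelihoods with per-graph MLE parameters on non-shared pairs and pooled MLE parameters on shared pairs) equals 0, and 0 is the maximum possible value of the objective. -/
import Mathlib


/-- Log-likelihood contribution of an ordered pair of distinct singleton blocks in
the k-clique reduction (see the paper's NP-hardness proof). -/
noncomputable def cliquePairTerm (c : ℝ) (shared : Bool) : ℝ :=
  (c * Real.log (if shared then (c + 1) / 2 else c) +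
    (1 - c) * Real.log (1 - (if shared then (c + 1) / 2 else c))) +
  (1 * Real.log (if shared then (c + 1) / 2 else 1) +
    0 * Real.log (1 - (if shared then (c + 1) / 2 else 1)))

open Finset in
/-- The SSBM-fixed objective of the k-clique reduction with singleton blocks and
shared vertex set `W`. -/
noncomputable def cliqueReductionObj {V : Type*} [Fintype V] [DecidableEq V]
    (G : SimpleGraph V) [DecidableRel G.Adj] (W : Finset V) : ℝ :=
  ∑ p ∈ (Finset.univ : Finset V).offDiag,
    cliquePairTerm (if G.Adj p.1 p.2 then (1 : ℝ) else 0)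
      (decide (p.1 ∈ W ∧ p.2 ∈ W))

lemma cliquePairTerm_one (s : Bool) : cliquePairTerm 1 s = 0 := by
  cases s <;> simp [cliquePairTerm]

lemma cliquePairTerm_zero_false : cliquePairTerm 0 false = 0 := by
  simp [cliquePairTerm]

lemma cliquePairTerm_zero_true : cliquePairTerm 0 true ≤ 0 := by
  have h : Real.log ((0 + 1) / 2 : ℝ) ≤ 0 := by
    apply Real.log_nonpos <;> norm_num
  simp only [cliquePairTerm]
  norm_num
  nlinarith [h]

lemma cliquePairTerm_nonpos (c : ℝ) (hc : c = 0 ∨ c = 1) (s : Bool) :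
    cliquePairTerm c s ≤ 0 := by
  rcases hc with h | h <;> subst h
  · cases s
    · exact le_of_eq cliquePairTerm_zero_false
    · exact cliquePairTerm_zero_true
  · exact le_of_eq (cliquePairTerm_one s)

/-- If `G` contains a `k`-clique `W`, then sharing the singleton blocks of `W`
achieves SSBM-fixed objective `0`, and `0` is the maximum possible value of the
objective. -/
theorem clique_gives_zero_objective {V : Type*} [Fintype V] [DecidableEq V]
    (G : SimpleGraph V) [DecidableRel G.Adj] (k : ℕ) (W : Finset V)
    (hW : G.IsNClique k W) :
    cliqueReductionObj G W = 0 ∧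
    ∀ W' : Finset V, cliqueReductionObj G W' ≤ 0 := by
  constructor
  · apply Finset.sum_eq_zero
    intro p hp
    rw [Finset.mem_offDiag] at hp
    by_cases hs : p.1 ∈ W ∧ p.2 ∈ W
    · have hadj : G.Adj p.1 p.2 := hW.isClique hs.1 hs.2 hp.2.2
      simp [hadj, cliquePairTerm_one]
    · by_cases ha : G.Adj p.1 p.2
      · simp [ha, cliquePairTerm_one]
      · simp [ha, hs, cliquePairTerm_zero_false]
  · intro W'
    apply Finset.sum_nonpos
    intro p _
    apply cliquePairTerm_nonpos
    by_cases ha : G.Adj p.1 p.2 <;> simp [ha]
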